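/- Let u : [0,1] → ℝ be continuously differentiable with u(0) = u(1) = 0. Then ∫_0^1 u'(x)² dx ≥ π²·∫_0^1 u(x)² dx. -/

import Mathlib

set_option maxHeartbeats 1000000

open Real Set Filter intervalIntegral

theorem stmt7 (u : ℝ → ℝ) (hu : ContDiff ℝ 1 u) (h0 : u 0 = 0) (h1 : u 1 = 0) :
    Real.pi ^ 2 * ∫ x in (0:ℝ)..1, (u x) ^ 2 ≤ ∫ x in (0:ℝ)..1, (deriv u x) ^ 2 := by
  have π_pos := Real.pi_pos
  have hcu' : Continuous (deriv u) := hu.continuous_deriv le_rfl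
  have hcu : Continuous u := hu.continuous
  have hud : ∀ x, HasDerivAt u (deriv u x) x := fun x =>
    ((hu.differentiable one_ne_zero) x).hasDerivAt
  set f : ℝ → ℝ := fun x => deriv u x ^ 2 - Real.pi ^ 2 * u x ^ 2 with hf
  have hcf : Continuous f := by fun_prop
  obtain ⟨M, hM⟩ := isCompact_Icc.exists_bound_of_continuousOn
    (s := Icc (0:ℝ) 1) hcu'.continuousOn
  obtain ⟨K, hK⟩ := isCompact_Icc.exists_bound_of_continuousOn
    (s := Icc (0:ℝ) 1) hcf.continuousOn
  have hM0 : 0 ≤ M := le_trans (norm_nonneg _) (hM 0 (by norm_num))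
  have hK0 : 0 ≤ K := le_trans (norm_nonneg _) (hK 0 (by norm_num))
  have hLip : ∀ x ∈ Icc (0:ℝ) 1, ∀ y ∈ Icc (0:ℝ) 1, ‖u y - u x‖ ≤ M * ‖y - x‖ := by
    intro x hx y hy
    exact (convex_Icc (0:ℝ) 1).norm_image_sub_le_of_norm_deriv_le
      (fun z hz => (hu.differentiable one_ne_zero) z)
      (fun z hz => by simpa using hM z hz) hx hy
  set g : ℝ → ℝ := fun x => Real.pi * u x ^ 2 * Real.cos (Real.pi * x) / Real.sin (Real.pi * x)
    with hgdef
  set D : ℝ → ℝ := fun x => (2 * Real.pi * u x * deriv u x * Real.cos (Real.pi * x) *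
      Real.sin (Real.pi * x) - Real.pi ^ 2 * u x ^ 2) / (Real.sin (Real.pi * x)) ^ 2 with hDdef
  have hsin : ∀ x ∈ Ioo (0:ℝ) 1, 0 < Real.sin (Real.pi * x) := by
    intro x hx
    exact Real.sin_pos_of_pos_of_lt_pi (by nlinarith [hx.1]) (by nlinarith [hx.2])
  have hgD : ∀ x ∈ Ioo (0:ℝ) 1, HasDerivAt g (D x) x := by
    intro x hx
    have hs := (hsin x hx).ne'
    have hsc := Real.sin_sq_add_cos_sq (Real.pi * x)
    have hcos : HasDerivAt (fun y => Real.cos (Real.pi * y)) (-Real.sin (Real.pi * x) * Real.pi) x := by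
      simpa [Function.comp_def] using (Real.hasDerivAt_cos (Real.pi * x)).comp x ((hasDerivAt_id x).const_mul Real.pi)
    have hsinD : HasDerivAt (fun y => Real.sin (Real.pi * y)) (Real.cos (Real.pi * x) * Real.pi) x := by
      simpa [Function.comp_def] using (Real.hasDerivAt_sin (Real.pi * x)).comp x ((hasDerivAt_id x).const_mul Real.pi)
    have hN : HasDerivAt (fun y => Real.pi * u y ^ 2 * Real.cos (Real.pi * y))
        ((Real.pi * ((2:ℕ) * u x ^ 1 * deriv u x)) * Real.cos (Real.pi * x) +
          Real.pi * u x ^ 2 * (-Real.sin (Real.pi * x) * Real.pi)) x :=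
      (((hud x).pow 2).const_mul Real.pi).mul hcos
    have hQ := hN.div hsinD hs
    convert hQ using 1
    show (2 * Real.pi * u x * deriv u x * Real.cos (Real.pi * x) *
      Real.sin (Real.pi * x) - Real.pi ^ 2 * u x ^ 2) / (Real.sin (Real.pi * x)) ^ 2 = _
    rw [div_eq_div_iff (pow_ne_zero 2 hs) (pow_ne_zero 2 hs)]
    push_cast
    linear_combination (Real.pi ^ 2 * u x ^ 2 * Real.sin (Real.pi * x) ^ 2) * hsc
    all_goals rfl
  have hfD : ∀ x ∈ Ioo (0:ℝ) 1, D x ≤ f x := by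
    intro x hx
    have hs := hsin x hx
    have hsc := Real.sin_sq_add_cos_sq (Real.pi * x)
    show (2 * Real.pi * u x * deriv u x * Real.cos (Real.pi * x) *
      Real.sin (Real.pi * x) - Real.pi ^ 2 * u x ^ 2) / (Real.sin (Real.pi * x)) ^ 2 ≤
      deriv u x ^ 2 - Real.pi ^ 2 * u x ^ 2
    rw [div_le_iff₀ (by positivity)]
    nlinarith [sq_nonneg (deriv u x * Real.sin (Real.pi * x) - Real.pi * u x * Real.cos (Real.pi * x)),
      sq_nonneg (Real.pi * u x), hsc]
  have key : ∀ t ∈ Ioo (0:ℝ) (1/4), -((2*M^2 + 2*K) * t) ≤ ∫ x in (0:ℝ)..1, f x := by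
    intro t ht
    obtain ⟨ht0, ht4⟩ := ht
    have htlt : t < 1 - t := by linarith
    have hsub : Icc t (1-t) ⊆ Ioo (0:ℝ) 1 := fun x hx => ⟨lt_of_lt_of_le ht0 hx.1, by
      have := hx.2; linarith⟩
    have hDcont : ContinuousOn D (uIcc t (1-t)) := by
      rw [uIcc_of_le htlt.le]
      apply ContinuousOn.div
      · fun_prop
      · fun_prop
      · intro x hx
        exact pow_ne_zero 2 (hsin x (hsub hx)).ne'
    have hDint : IntervalIntegrable D MeasureTheory.volume t (1-t) :=
      hDcont.intervalIntegrable
    have hftc : ∫ x in t..(1-t), D x = g (1-t) - g t := by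
      apply intervalIntegral.integral_eq_sub_of_hasDerivAt
      · intro x hx
        rw [uIcc_of_le htlt.le] at hx
        exact hgD x (hsub hx)
      · exact hDint
    have hmono : ∫ x in t..(1-t), D x ≤ ∫ x in t..(1-t), f x := by
      apply intervalIntegral.integral_mono_on htlt.le hDint
        (hcf.intervalIntegrable _ _)
      intro x hx
      exact hfD x (hsub hx)
    have hspos : 0 < Real.sin (Real.pi * t) := hsin t ⟨ht0, by linarith⟩
    have hcpos : 0 < Real.cos (Real.pi * t) := Real.cos_pos_of_mem_Ioo ⟨by nlinarith, by nlinarith⟩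
    have hcotb : Real.cos (Real.pi * t) / Real.sin (Real.pi * t) ≤ 1 / (Real.pi * t) := by
      have h1 : Real.pi * t < Real.pi / 2 := by nlinarith
      have h2 : 0 < Real.pi * t := by positivity
      have htan := Real.lt_tan h2 h1
      rw [Real.tan_eq_sin_div_cos, lt_div_iff₀ hcpos] at htan
      rw [div_le_div_iff₀ hspos h2]
      nlinarith
    have hut2 : u t ^ 2 ≤ M ^ 2 * t ^ 2 := by
      have h' := hLip 0 (by norm_num) t ⟨ht0.le, by linarith⟩
      rw [h0, sub_zero, Real.norm_eq_abs, Real.norm_eq_abs, sub_zero, abs_of_pos ht0] at h'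
      nlinarith [abs_nonneg (u t), sq_abs (u t)]
    have hu1t2 : u (1-t) ^ 2 ≤ M ^ 2 * t ^ 2 := by
      have h' := hLip 1 (by norm_num) (1-t) ⟨by linarith, by linarith⟩
      rw [h1, sub_zero, Real.norm_eq_abs, Real.norm_eq_abs,
        show (1:ℝ) - t - 1 = -t by ring, abs_neg, abs_of_pos ht0] at h'
      nlinarith [abs_nonneg (u (1-t)), sq_abs (u (1-t))]
    have hgt : g t ≤ M ^ 2 * t := by
      show Real.pi * u t ^ 2 * Real.cos (Real.pi * t) / Real.sin (Real.pi * t) ≤ M ^ 2 * t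
      rw [mul_div_assoc]
      calc Real.pi * u t ^ 2 * (Real.cos (Real.pi * t) / Real.sin (Real.pi * t))
          ≤ Real.pi * (M^2 * t^2) * (1 / (Real.pi * t)) := by
            apply mul_le_mul (mul_le_mul_of_nonneg_left hut2 π_pos.le) hcotb
              (by positivity) (by positivity)
        _ = M ^ 2 * t := by field_simp
    have hg1t : -(M ^ 2 * t) ≤ g (1-t) := by
      show -(M ^ 2 * t) ≤ Real.pi * u (1-t) ^ 2 * Real.cos (Real.pi * (1-t)) / Real.sin (Real.pi * (1-t))
      have hc1 : Real.cos (Real.pi * (1-t)) = -Real.cos (Real.pi * t) := by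
        rw [show Real.pi * (1-t) = Real.pi - Real.pi * t by ring, Real.cos_pi_sub]
      have hs1 : Real.sin (Real.pi * (1-t)) = Real.sin (Real.pi * t) := by
        rw [show Real.pi * (1-t) = Real.pi - Real.pi * t by ring, Real.sin_pi_sub]
      rw [hc1, hs1]
      have hb : Real.pi * u (1-t) ^ 2 * (Real.cos (Real.pi * t) / Real.sin (Real.pi * t))
          ≤ M ^ 2 * t := by
        calc Real.pi * u (1-t) ^ 2 * (Real.cos (Real.pi * t) / Real.sin (Real.pi * t))
            ≤ Real.pi * (M^2 * t^2) * (1 / (Real.pi * t)) := by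
              apply mul_le_mul (mul_le_mul_of_nonneg_left hu1t2 π_pos.le) hcotb
                (by positivity) (by positivity)
          _ = M ^ 2 * t := by field_simp
      have h2 : Real.pi * u (1-t) ^ 2 * (-Real.cos (Real.pi * t)) / Real.sin (Real.pi * t) =
          -(Real.pi * u (1-t) ^ 2 * (Real.cos (Real.pi * t) / Real.sin (Real.pi * t))) := by ring
      rw [h2]
      linarith
    have hi1 : IntervalIntegrable f MeasureTheory.volume 0 t := hcf.intervalIntegrable _ _
    have hi2 : IntervalIntegrable f MeasureTheory.volume t (1-t) := hcf.intervalIntegrable _ _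
    have hi3 : IntervalIntegrable f MeasureTheory.volume (1-t) 1 := hcf.intervalIntegrable _ _
    have hsplit : (∫ x in (0:ℝ)..1, f x) =
        (∫ x in (0:ℝ)..t, f x) + (∫ x in t..(1-t), f x) + (∫ x in (1-t)..1, f x) := by
      rw [intervalIntegral.integral_add_adjacent_intervals hi1 hi2,
        intervalIntegral.integral_add_adjacent_intervals (hi1.trans hi2) hi3]
    have hb1 : ‖∫ x in (0:ℝ)..t, f x‖ ≤ K * |t - 0| := by
      apply intervalIntegral.norm_integral_le_of_norm_le_const
      intro x hx
      rw [uIoc_of_le ht0.le] at hx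
      exact hK x ⟨hx.1.le, by linarith [hx.2]⟩
    have hb3 : ‖∫ x in (1-t)..1, f x‖ ≤ K * |1 - (1-t)| := by
      apply intervalIntegral.norm_integral_le_of_norm_le_const
      intro x hx
      rw [uIoc_of_le (by linarith : (1:ℝ)-t ≤ 1)] at hx
      exact hK x ⟨by linarith [hx.1], hx.2⟩
    rw [sub_zero, abs_of_pos ht0, Real.norm_eq_abs] at hb1
    rw [show (1:ℝ) - (1-t) = t by ring, abs_of_pos ht0, Real.norm_eq_abs] at hb3
    have e1 := (abs_le.mp hb1).1
    have e3 := (abs_le.mp hb3).1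
    have hmid : -(2 * M^2 * t) ≤ ∫ x in t..(1-t), f x := by
      have h' : g (1-t) - g t ≤ ∫ x in t..(1-t), f x := hftc ▸ hmono
      linarith
    rw [hsplit]
    linarith
  have hlim : Tendsto (fun t : ℝ => -((2*M^2 + 2*K) * t)) (nhdsWithin 0 (Ioi 0)) (nhds 0) := by
    have h' : Tendsto (fun t : ℝ => -((2*M^2 + 2*K) * t)) (nhds 0) (nhds (-((2*M^2 + 2*K) * 0))) :=
      ((continuous_const.mul continuous_id).neg).tendsto 0
    simpa using h'.mono_left nhdsWithin_le_nhds
  have hpos : (0:ℝ) ≤ ∫ x in (0:ℝ)..1, f x := by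
    refine le_of_tendsto hlim ?_
    filter_upwards [Ioo_mem_nhdsGT_of_mem (by norm_num : (0:ℝ) ∈ Ico (0:ℝ) (1/4))] with t ht
    exact key t ht
  have heq : (∫ x in (0:ℝ)..1, f x) =
      (∫ x in (0:ℝ)..1, deriv u x ^ 2) - Real.pi ^ 2 * ∫ x in (0:ℝ)..1, u x ^ 2 := by
    rw [hf]
    rw [intervalIntegral.integral_sub (f := fun x => deriv u x ^ 2) (g := fun x => Real.pi ^ 2 * u x ^ 2) ((hcu'.pow 2).intervalIntegrable _ _)
      ((continuous_const.mul (hcu.pow 2)).intervalIntegrable _ _),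
      intervalIntegral.integral_const_mul]
  rw [heq] at hpos
  linarith
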